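/- Let p ∈ (0,1). Suppose x_L* satisfies the first-order condition d/dx[Û(x, θ_L) − (1−p) g(x) − p Û(x, θ_H)] = 0 at x_L*, and x_L† satisfies d/dx[Û(x, θ_L) − g(x)] = 0 at x_L†. Assume the derivative x ↦ d/dx[Û(x, θ_L) − g(x)] is strictly decreasing (strictly antitone) and the derivative sorting condition holds: ∂Û/∂x(x, θ_H) ≥ ∂Û/∂x(x, θ_L) for all x. Then x_L* ≤ x_L†: under asymmetric information the low type receives a quality level no greater than the first-best level. -/

import Mathlib

/-- Under asymmetric information the low type receives a quality level no greater than
the first-best level. -/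
theorem stmt_6 (Uhat : ℝ → ℝ → ℝ) (g : ℝ → ℝ) (p θL θH xLs xLd : ℝ)
    (hθ : θL < θH) (hp0 : 0 < p) (hp1 : p < 1)
    (hdiffL : Differentiable ℝ (fun x => Uhat x θL))
    (hdiffH : Differentiable ℝ (fun x => Uhat x θH))
    (hdiffg : Differentiable ℝ g)
    (hfocS : deriv (fun x => Uhat x θL - (1 - p) * g x - p * Uhat x θH) xLs = 0)
    (hfocF : deriv (fun x => Uhat x θL - g x) xLd = 0)
    (hanti : StrictAnti (fun x => deriv (fun y => Uhat y θL - g y) x))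
    (hsort : ∀ x : ℝ, deriv (fun y => Uhat y θL) x ≤ deriv (fun y => Uhat y θH) x) :
    xLs ≤ xLd := by
  have hS : deriv (fun x => Uhat x θL - (1 - p) * g x - p * Uhat x θH) xLs
      = deriv (fun x => Uhat x θL) xLs - (1 - p) * deriv g xLs
        - p * deriv (fun x => Uhat x θH) xLs := by
    rw [deriv_fun_sub (((hdiffL xLs).fun_sub ((hdiffg xLs).const_mul _)))
        ((hdiffH xLs).const_mul _),
      deriv_fun_sub (hdiffL xLs) ((hdiffg xLs).const_mul _),
      deriv_const_mul _ (hdiffg xLs), deriv_const_mul _ (hdiffH xLs)]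
  have key : 0 ≤ deriv (fun y => Uhat y θL - g y) xLs := by
    have h1 : deriv (fun y => Uhat y θL - g y) xLs
        = deriv (fun x => Uhat x θL) xLs - deriv g xLs := by
      rw [deriv_fun_sub (hdiffL xLs) (hdiffg xLs)]
    rw [h1]
    have hE : deriv (fun x => Uhat x θL) xLs - (1 - p) * deriv g xLs
        - p * deriv (fun x => Uhat x θH) xLs = 0 := by rw [← hS]; exact hfocS
    have hs := hsort xLs
    nlinarith [hs, hE]
  by_contra h
  push_neg at h
  have := hanti h
  simp only at this
  rw [hfocF] at this
  linarith [key]
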